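/- If G is a group and Out(G) is its outer automorphism group, and both G and Out(G) satisfy the Tits alternative relative to a class C of groups that is stable under isomorphisms and extensions, then Aut(G) satisfies the Tits alternative relative to C. -/

import Mathlib

/-- A group contains a free subgroup of rank two. -/
def HasFreeSubgroupRankTwo (G : Type*) [Group G] : Prop :=
  ∃ f : FreeGroup (Fin 2) →* G, Function.Injective f

/-- `G` satisfies the Tits alternative relative to a class `C` of groups:
every subgroup of `G` either belongs to `C` or contains a free subgroup of rank two. -/
def SatisfiesTitsAlternativeRel (C : (H : Type u) → [inst : Group H] → Prop)
    (G : Type u) [Group G] : Prop :=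
  ∀ H : Subgroup G, C H ∨ HasFreeSubgroupRankTwo H

/-- The subgroup of inner automorphisms of `G` inside `Aut(G) = MulAut G`. -/
def innAuts (G : Type u) [Group G] : Subgroup (MulAut G) :=
  (MulAut.conj (G := G)).range

/-- The inner automorphisms form a normal subgroup of `Aut(G)`. -/
instance innAuts_normal (G : Type u) [Group G] : (innAuts G).Normal := by
  constructor
  rintro n ⟨g, rfl⟩ φ
  refine ⟨φ g, ?_⟩
  ext x
  simp [MulAut.conj]


universe u

open Function FreeGroup

namespace TitsAux

variable {α : Type*} [DecidableEq α]

lemma reduce_cons_of_ne (c hd : α × Bool) (tl : List (α × Bool))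
    (hred : reduce (hd :: tl) = hd :: tl)
    (h : ¬(c.1 = hd.1 ∧ c.2 = !hd.2)) :
    reduce (c :: hd :: tl) = c :: hd :: tl := by
  rw [reduce.cons, hred]
  simp [h]

lemma invRev_append_single (M : List (α × Bool)) (d : α × Bool) :
    invRev (M ++ [d]) = (d.1, !d.2) :: invRev M := by
  simp [invRev]

lemma reduce_append_single (M : List (α × Bool)) (hM : reduce M = M) (hne : M ≠ [])
    (d : α × Bool) (h : ¬(d.1 = (M.getLast hne).1 ∧ d.2 = !(M.getLast hne).2)) :
    reduce (M ++ [d]) = M ++ [d] := by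
  set t := M.getLast hne with ht
  have hMsplit : M.dropLast ++ [t] = M := M.dropLast_append_getLast hne
  have hinv : invRev M = (t.1, !t.2) :: invRev M.dropLast := by
    conv_lhs => rw [← hMsplit]
    exact invRev_append_single _ _
  have hinvred : reduce (invRev M) = invRev M := by
    rw [reduce_invRev, hM]
  have key : reduce ((d.1, !d.2) :: invRev M) = (d.1, !d.2) :: invRev M := by
    rw [hinv] at hinvred ⊢
    refine reduce_cons_of_ne _ _ _ hinvred ?_
    simpa using h
  have : reduce (invRev (M ++ [d])) = invRev (M ++ [d]) := by
    rw [invRev_append_single, key]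
  have := congrArg invRev this
  rwa [← reduce_invRev, invRev_invRev] at this

/-- A nontrivial element of the free group on two generators is not central. -/
lemma eq_one_of_central {w : FreeGroup (Fin 2)} (hw : ∀ u, u * w = w * u) : w = 1 := by
  by_contra hne
  set L := w.toWord with hL
  have hLred : reduce L = L := w.reduce_toWord
  have hLne : L ≠ [] := by
    simpa [hL, toWord_eq_nil_iff] using hne
  set h0 := L.head hLne with hh0
  set t := L.getLast hLne with htd
  -- choose a letter c avoiding the inverse of the head and the last letter
  have hc : ∃ c : Fin 2 × Bool, c ≠ (h0.1, !h0.2) ∧ c ≠ t := by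
    have hcard : ({(h0.1, !h0.2), t} : Finset (Fin 2 × Bool)).card ≤ 2 :=
      Finset.card_insert_le _ _ |>.trans (by simp)
    have : 0 < ({(h0.1, !h0.2), t} : Finset (Fin 2 × Bool))ᶜ.card := by
      rw [Finset.card_compl]
      have : Fintype.card (Fin 2 × Bool) = 4 := by simp
      omega
    obtain ⟨c, hcmem⟩ := Finset.card_pos.mp this
    simp only [Finset.mem_compl, Finset.mem_insert, Finset.mem_singleton, not_or] at hcmem
    exact ⟨c, hcmem.1, hcmem.2⟩
  obtain ⟨c, hc1, hc2⟩ := hc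
  set g : FreeGroup (Fin 2) := mk [c] with hg
  -- first: toWord (g * w) = c :: L
  have hLsplit : L.head hLne :: L.tail = L := List.cons_head_tail hLne
  have hred1 : reduce (c :: L) = c :: L := by
    conv_lhs => rw [← hLsplit]
    conv_rhs => rw [← hLsplit]
    refine reduce_cons_of_ne _ _ _ (by rw [hLsplit]; exact hLred) ?_
    intro ⟨h1, h2⟩
    exact hc1 (Prod.ext h1 h2)
  have hcnered : (c :: L) ≠ [] := by simp
  have hred2 : reduce ((c :: L) ++ [(c.1, !c.2)]) = (c :: L) ++ [(c.1, !c.2)] := by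
    refine reduce_append_single _ hred1 hcnered _ ?_
    have hlast : (c :: L).getLast hcnered = t := by
      rw [htd, List.getLast_cons hLne]
    rw [hlast]
    rintro ⟨h1, h2⟩
    apply hc2
    refine Prod.ext h1 ?_
    have := congrArg (!·) h2
    simpa using this
  -- g * w * g⁻¹ = w since w is central
  have hcentral : g * w * g⁻¹ = w := by
    rw [hw g, mul_inv_cancel_right]
  have hw_eq : w = mk L := by rw [hL, mk_toWord]
  have hginv : g⁻¹ = mk [(c.1, !c.2)] := by
    rw [hg, inv_mk]; rfl
  have hprod : g * w * g⁻¹ = mk ((c :: L) ++ [(c.1, !c.2)]) := by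
    rw [hw_eq, hg, hginv, mul_mk, mul_mk]
    rfl
  have hlen : (g * w * g⁻¹).toWord.length = L.length + 2 := by
    rw [hprod, toWord_mk, hred2]
    simp
  rw [hcentral, ← hL] at hlen
  omega

/-- Free subgroups lift along surjections (projectivity of free groups). -/
lemma hasFree_of_surjective {A B : Type*} [Group A] [Group B] (φ : A →* B)
    (hφ : Surjective φ) (hB : HasFreeSubgroupRankTwo B) : HasFreeSubgroupRankTwo A := by
  obtain ⟨f, hf⟩ := hB
  choose s hs using fun i => hφ (f (FreeGroup.of i))
  refine ⟨FreeGroup.lift s, ?_⟩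
  have hcomp : φ.comp (FreeGroup.lift s) = f := by
    apply FreeGroup.ext_hom
    intro a
    simp [hs]
  intro x y hxy
  apply hf
  rw [← hcomp]
  simp only [MonoidHom.comp_apply, hxy]

/-- Free subgroups push forward along homs with central kernel. -/
lemma hasFree_of_central_ker {A B : Type*} [Group A] [Group B] (φ : A →* B)
    (hker : ∀ a ∈ φ.ker, ∀ x : A, a * x = x * a)
    (hA : HasFreeSubgroupRankTwo A) : HasFreeSubgroupRankTwo B := by
  obtain ⟨f, hf⟩ := hA
  refine ⟨φ.comp f, ?_⟩
  have : ∀ w : FreeGroup (Fin 2), φ.comp f w = 1 → w = 1 := by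
    intro w hwk
    apply eq_one_of_central
    intro u
    apply hf
    have hfw : f w ∈ φ.ker := hwk
    rw [_root_.map_mul, _root_.map_mul]
    exact (hker _ hfw (f u)).symm
  intro x y hxy
  have h1 : φ.comp f (x * y⁻¹) = 1 := by
    rw [_root_.map_mul, _root_.map_inv, hxy, mul_inv_cancel]
  exact mul_inv_eq_one.mp (this _ h1)

lemma hasFree_of_subgroup {A : Type*} [Group A] (K : Subgroup A)
    (hK : HasFreeSubgroupRankTwo K) : HasFreeSubgroupRankTwo A := by
  obtain ⟨f, hf⟩ := hK
  exact ⟨K.subtype.comp f, K.subtype_injective.comp hf⟩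

end TitsAux


/-- If `C` is stable under isomorphisms, extensions and quotients, and both `G` and
`Out(G) = Aut(G)/Inn(G)` satisfy the Tits alternative relative to `C`, then `Aut(G)`
satisfies the Tits alternative relative to `C`. -/
theorem titsAlternative_aut
    (C : (H : Type u) → [inst : Group H] → Prop)
    (hiso : ∀ (A B : Type u) [Group A] [Group B], (A ≃* B) → C A → C B)
    (hext : ∀ (A : Type u) [Group A] (N : Subgroup A) [N.Normal],
      C N → C (A ⧸ N) → C A)
    (hquot : ∀ (A : Type u) [Group A] (N : Subgroup A) [N.Normal], C A → C (A ⧸ N))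
    (G : Type u) [Group G]
    (hG : SatisfiesTitsAlternativeRel C G)
    (hOut : SatisfiesTitsAlternativeRel C (MulAut G ⧸ innAuts G)) :
    SatisfiesTitsAlternativeRel C (MulAut G) := by
  intro H
  set π := QuotientGroup.mk' (innAuts G) with hπ
  set Q := H.map π with hQdef
  rcases hOut Q with hQ | hQfree
  · -- the image of H in Out(G) is in C
    set N := (innAuts G).subgroupOf H with hNdef
    -- the map from the preimage of H under conj onto N
    set K : Subgroup G := Subgroup.comap (MulAut.conj) H with hKdef
    have hmemN : ∀ x : K, MulAut.conj (x : G) ∈ H := fun x => x.2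
    let χ : K →* N :=
      { toFun := fun x => ⟨⟨MulAut.conj (x : G), x.2⟩,
          Subgroup.mem_subgroupOf.mpr ⟨(x : G), rfl⟩⟩
        map_one' := by ext; simp
        map_mul' := by intro a b; ext; simp }
    have hχ_surj : Function.Surjective χ := by
      rintro ⟨⟨φ, hφH⟩, hφN⟩
      obtain ⟨g, hg⟩ := Subgroup.mem_subgroupOf.mp hφN
      have hgK : g ∈ K := by
        rw [hKdef, Subgroup.mem_comap]
        simpa [hg] using hφH
      refine ⟨⟨g, hgK⟩, ?_⟩
      apply Subtype.ext; apply Subtype.ext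
      exact hg
    have hχ_ker_central : ∀ a ∈ χ.ker, ∀ x : K, a * x = x * a := by
      intro a ha x
      have h1 : MulAut.conj (a : G) = 1 := by
        have := congrArg (fun n : N => ((n : H) : MulAut G)) ha
        simpa [χ] using this
      have hcomm : (a : G) * (x : G) = (x : G) * (a : G) := by
        have := congrArg (fun ψ : MulAut G => ψ (x : G)) h1
        simp only [MulAut.conj_apply, MulAut.one_apply] at this
        calc (a : G) * (x : G) = ((a : G) * (x : G) * (a : G)⁻¹) * (a : G) := by group
        _ = (x : G) * (a : G) := by rw [this]
      exact Subtype.ext hcomm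
    rcases hG K with hK | hKfree
    · -- C K, hence C N by quotient stability, hence C H by extension
      left
      have hquotK : C (K ⧸ χ.ker) := hquot (↥K) χ.ker hK
      have hCN : C ↥N :=
        hiso _ _ (QuotientGroup.quotientKerEquivOfSurjective χ hχ_surj) hquotK
      -- iso  H ⧸ N ≃* Q
      have hCQuot : C (↥H ⧸ N) := by
        set φH : ↥H →* (MulAut G ⧸ innAuts G) := π.comp H.subtype with hφH
        have hker : φH.ker = N := by
          rw [hφH, ← MonoidHom.comap_ker, QuotientGroup.ker_mk']
          rfl
        have hrange : φH.range = Q := by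
          rw [hφH, MonoidHom.range_comp, Subgroup.range_subtype, hQdef]
        have e : (↥H ⧸ N) ≃* ↥Q :=
          ((QuotientGroup.quotientMulEquivOfEq hker.symm).trans
            (QuotientGroup.quotientKerEquivRange φH)).trans
            (MulEquiv.subgroupCongr hrange)
        exact hiso _ _ e.symm hQ
      exact hext (↥H) N hCN hCQuot
    · -- K has a free subgroup; push it into N ≤ H
      right
      have hNfree : HasFreeSubgroupRankTwo ↥N :=
        TitsAux.hasFree_of_central_ker χ hχ_ker_central hKfree
      exact TitsAux.hasFree_of_subgroup N hNfree
  · -- Q has a free subgroup; lift it to H by projectivity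
    right
    exact TitsAux.hasFree_of_surjective (π.subgroupMap H)
      (π.subgroupMap_surjective H) hQfree
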